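/- Let n ≥ 2. Then f_n({1}) = 2^{n−1}, f_n({n−1}) = 2^{n−1}, and f_n({n}) = 2^{n−1}. Moreover, for every k with 2 ≤ k ≤ n−2 (so n ≥ 4), f_n({k}) = 5·2^{n−3} − 2^{k−2}. -/

import Mathlib

/-- `σ` is in the set-alternating domain of `A` on alternatives `{1,…,n}`
(alternative `m` is represented by the index `m-1 : Fin n`; `σ x` is the rank
of alternative `x`, smaller rank = better). For every triple `i < j < k`:
if the middle alternative `j` (whose 1-based name is `j+1`) is in `A`, then
`i` is never ranked below both `j` and `k` (1N3); otherwise `k` is never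
ranked above both `i` and `j` (3N1). -/
def inSetAltDomain (n : ℕ) (A : Finset ℕ) (σ : Equiv.Perm (Fin n)) : Prop :=
  ∀ i j k : Fin n, i < j → j < k →
    (((j : ℕ) + 1 ∈ A) → ¬ (σ j < σ i ∧ σ k < σ i)) ∧
    (((j : ℕ) + 1 ∉ A) → ¬ (σ k < σ i ∧ σ k < σ j))

/-- The set-alternating domain `D_n(A)`. -/
def setAltDomain (n : ℕ) (A : Finset ℕ) : Set (Equiv.Perm (Fin n)) :=
  {σ | inSetAltDomain n A σ}

/-- `f_n(A)`, the cardinality of `D_n(A)`. -/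
noncomputable def fsize (n : ℕ) (A : Finset ℕ) : ℕ := (setAltDomain n A).ncard

set_option maxHeartbeats 1000000

open Equiv Finset

theorem Equiv.Perm.apply_inv_self {α : Type*} (f : Equiv.Perm α) (x : α) : f (f⁻¹ x) = x :=
  f.apply_symm_apply x

theorem Equiv.Perm.inv_apply_self {α : Type*} (f : Equiv.Perm α) (x : α) : f⁻¹ (f x) = x :=
  f.symm_apply_apply x

namespace SetAltAux

instance (n : ℕ) (A : Finset ℕ) : DecidablePred (inSetAltDomain n A) := fun σ => by
  unfold inSetAltDomain; infer_instance

def Df (n : ℕ) (A : Finset ℕ) : Finset (Equiv.Perm (Fin n)) := univ.filter (inSetAltDomain n A)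

def ins (n : ℕ) (τ : Equiv.Perm (Fin n)) (r : Fin (n+1)) : Equiv.Perm (Fin (n+1)) :=
  ((finSuccEquiv' (Fin.last n)).trans (τ.optionCongr)).trans (finSuccEquiv' r).symm

lemma ins_last (n : ℕ) (τ : Equiv.Perm (Fin n)) (r : Fin (n+1)) :
    ins n τ r (Fin.last n) = r := by
  simp [ins]

lemma ins_castSucc (n : ℕ) (τ : Equiv.Perm (Fin n)) (r : Fin (n+1)) (i : Fin n) :
    ins n τ r (Fin.castSucc i) = r.succAbove (τ i) := by
  simp [ins, ← Fin.succAbove_last, finSuccEquiv'_succAbove, finSuccEquiv'_symm_some]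

lemma coe_succAbove {n : ℕ} (r : Fin (n+1)) (x : Fin n) :
    ((r.succAbove x : Fin (n+1)) : ℕ) = if (x:ℕ) < (r:ℕ) then (x:ℕ) else (x:ℕ)+1 := by
  rw [Fin.succAbove]
  split_ifs with h1 h2 h2 <;> simp_all [Fin.lt_def] <;> omega

lemma ins_surj (n : ℕ) (σ : Equiv.Perm (Fin (n+1))) : ∃ τ, ins n τ (σ (Fin.last n)) = σ := by
  set r := σ (Fin.last n) with hr
  set e : Option (Fin n) ≃ Option (Fin n) :=
    ((finSuccEquiv' (Fin.last n)).symm.trans (σ.trans (finSuccEquiv' r))) with he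
  refine ⟨Equiv.removeNone e, ?_⟩
  ext x
  induction x using Fin.lastCases with
  | last => rw [ins_last]
  | cast i =>
    rw [ins_castSucc]
    have hne : σ (Fin.castSucc i) ≠ r := by
      intro h
      exact (Fin.castSucc_lt_last i).ne (σ.injective h)
    obtain ⟨j, hj⟩ := Fin.exists_succAbove_eq hne
    have he2 : e (some i) = some j := by
      simp only [he, Equiv.trans_apply, finSuccEquiv'_symm_some, Fin.succAbove_last, ← hj,
        finSuccEquiv'_succAbove]
    have h3 : Equiv.removeNone e i = j :=
      Option.some_injective _ ((Equiv.removeNone_some e ⟨j, he2⟩).trans he2)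
    rw [h3, hj]

lemma ins_inj (n : ℕ) (r : Fin (n+1)) {τ1 τ2 : Equiv.Perm (Fin n)}
    (h : ins n τ1 r = ins n τ2 r) : τ1 = τ2 := by
  ext i
  have := congrArg (fun σ : Equiv.Perm (Fin (n+1)) => σ (Fin.castSucc i)) h
  simp only [ins_castSucc] at this
  exact congrArg Fin.val (Fin.succAbove_right_injective this)

lemma card_decomp {n : ℕ} (P : Equiv.Perm (Fin (n+1)) → Prop) [DecidablePred P] :
    (univ.filter P).card
      = ∑ r : Fin (n+1), (univ.filter fun τ : Equiv.Perm (Fin n) => P (ins n τ r)).card := by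
  rw [Finset.card_eq_sum_card_fiberwise (f := fun σ : Equiv.Perm (Fin (n+1)) => σ (Fin.last n))
    (t := univ) (fun x _ => mem_univ _)]
  refine Finset.sum_congr rfl fun r _ => ?_
  refine (Finset.card_bij (fun τ _ => ins n τ r) ?_ ?_ ?_).symm
  · intro τ hτ
    simp only [mem_filter, mem_univ, true_and] at hτ ⊢
    exact ⟨hτ, ins_last ..⟩
  · intro τ1 h1 τ2 h2 h
    exact ins_inj n r h
  · intro σ hσ
    simp only [mem_filter, mem_univ, true_and] at hσ
    obtain ⟨τ, hτ⟩ := ins_surj n σ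
    refine ⟨τ, by simp only [mem_filter, mem_univ, true_and]; rw [hσ.2] at hτ; rw [hτ]; exact hσ.1, by rw [hσ.2] at hτ; exact hτ⟩

/-- master membership lemma -/
lemma mem_ins_iff {n m : ℕ} (τ : Equiv.Perm (Fin n)) (r : Fin (n+1)) :
    inSetAltDomain (n+1) {m} (ins n τ r) ↔
      (inSetAltDomain n {m} τ ∧
      ∀ i j : Fin n, i < j →
        (((j:ℕ) + 1 = m) → ¬ ((τ j : ℕ) < (τ i : ℕ) ∧ (r:ℕ) ≤ (τ i : ℕ))) ∧
        (((j:ℕ) + 1 ≠ m) → ¬ ((r:ℕ) ≤ (τ i:ℕ) ∧ (r:ℕ) ≤ (τ j:ℕ)))) := by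
  have key : ∀ x y : Fin n, (ins n τ r (Fin.castSucc x) < ins n τ r (Fin.castSucc y))
      ↔ (τ x:ℕ) < (τ y:ℕ) := by
    intro x y
    rw [Fin.lt_def, ins_castSucc, ins_castSucc, coe_succAbove, coe_succAbove]
    have := (τ x).isLt; have := (τ y).isLt
    split_ifs <;> omega
  have key2 : ∀ x : Fin n, (ins n τ r (Fin.last n) < ins n τ r (Fin.castSucc x))
      ↔ (r:ℕ) ≤ (τ x:ℕ) := by
    intro x
    rw [Fin.lt_def, ins_last, ins_castSucc, coe_succAbove]
    split_ifs <;> omega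
  constructor
  · intro h
    constructor
    · intro i j k hij hjk
      have := h (Fin.castSucc i) (Fin.castSucc j) (Fin.castSucc k)
        (Fin.castSucc_lt_castSucc_iff.2 hij) (Fin.castSucc_lt_castSucc_iff.2 hjk)
      simp only [key, Fin.coe_castSucc, Finset.mem_singleton, Fin.lt_def] at this ⊢
      exact this
    · intro i j hij
      have := h (Fin.castSucc i) (Fin.castSucc j) (Fin.last n)
        (Fin.castSucc_lt_castSucc_iff.2 hij) (Fin.castSucc_lt_last _)
      simp only [key, key2, Fin.coe_castSucc, Finset.mem_singleton] at this
      exact this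
  · rintro ⟨h1, h2⟩ i j k hij hjk
    induction k using Fin.lastCases with
    | cast k =>
      induction j using Fin.lastCases with
      | last => exact absurd hjk (Fin.castSucc_lt_last k).asymm
      | cast j =>
        induction i using Fin.lastCases with
        | last => exact absurd hij (Fin.castSucc_lt_last j).asymm
        | cast i =>
          have := h1 i j k (Fin.castSucc_lt_castSucc_iff.1 hij) (Fin.castSucc_lt_castSucc_iff.1 hjk)
          simp only [key, Fin.coe_castSucc, Finset.mem_singleton, Fin.lt_def] at this ⊢
          exact this
    | last =>
      induction j using Fin.lastCases with
      | last => exact absurd hjk (lt_irrefl _)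
      | cast j =>
        induction i using Fin.lastCases with
        | last => exact absurd (hij.trans hjk) (lt_irrefl _)
        | cast i =>
          have := h2 i j (Fin.castSucc_lt_castSucc_iff.1 hij)
          simp only [key, key2, Fin.coe_castSucc, Finset.mem_singleton] at this ⊢
          exact this

lemma exists_chain3 {α : Type*} [LinearOrder α] (P : α → Prop) (a b c : α)
    (hab : a ≠ b) (hac : a ≠ c) (hbc : b ≠ c) (ha : P a) (hb : P b) (hc : P c) :
    ∃ x y z : α, x < y ∧ y < z ∧ P x ∧ P y ∧ P z := by
  rcases lt_trichotomy a b with h | h | h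
  · rcases lt_trichotomy b c with h' | h' | h'
    · exact ⟨a, b, c, h, h', ha, hb, hc⟩
    · exact absurd h' hbc
    · rcases lt_trichotomy a c with h'' | h'' | h''
      · exact ⟨a, c, b, h'', h', ha, hc, hb⟩
      · exact absurd h'' hac
      · exact ⟨c, a, b, h'', h, hc, ha, hb⟩
  · exact absurd h hab
  · rcases lt_trichotomy a c with h' | h' | h'
    · exact ⟨b, a, c, h, h', hb, ha, hc⟩
    · exact absurd h' hac
    · rcases lt_trichotomy b c with h'' | h'' | h''
      · exact ⟨b, c, a, h'', h', hb, hc, ha⟩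
      · exact absurd h'' hbc
      · exact ⟨c, b, a, h'', h, hc, hb, ha⟩

section Fibers
variable {n m : ℕ} (τ : Equiv.Perm (Fin (n+2))) (r : Fin (n+3))

lemma val_inv_apply (x : Fin (n+2)) : τ (τ⁻¹ x) = x := Equiv.Perm.apply_inv_self τ x

lemma eq_inv_iff (x y : Fin (n+2)) : x = τ⁻¹ y ↔ τ x = y := by
  constructor
  · rintro rfl; exact Equiv.Perm.apply_inv_self τ y
  · intro h; rw [← h]; exact (Equiv.Perm.inv_apply_self τ x).symm

lemma fiber_top (hr : (r:ℕ) = n+2) :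
    inSetAltDomain (n+3) {m} (ins (n+2) τ r) ↔ inSetAltDomain (n+2) {m} τ := by
  rw [mem_ins_iff]
  refine and_iff_left fun i j hij => ?_
  have := (τ i).isLt
  have := (τ j).isLt
  constructor
  · rintro _ ⟨_, h⟩; omega
  · rintro _ ⟨h, _⟩; omega

lemma fiber_sec (hr : (r:ℕ) = n+1) :
    inSetAltDomain (n+3) {m} (ins (n+2) τ r) ↔
      (inSetAltDomain (n+2) {m} τ ∧
       ∀ j : Fin (n+2), τ⁻¹ (Fin.last (n+1)) < j → (j:ℕ)+1 ≠ m) := by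
  rw [mem_ins_iff]
  set a := τ⁻¹ (Fin.last (n+1)) with ha
  have hτa : (τ a : ℕ) = n+1 := by rw [ha, val_inv_apply]; rfl
  have hval : ∀ x : Fin (n+2), n+1 ≤ (τ x : ℕ) → x = a := by
    intro x h
    rw [ha, eq_inv_iff]
    have := (τ x).isLt
    exact Fin.ext (by simp only [Fin.val_last]; omega)
  constructor
  · rintro ⟨hD, hC⟩
    refine ⟨hD, fun j haj hjm => ?_⟩
    refine (hC a j haj).1 hjm ⟨?_, by omega⟩
    have hjne : j ≠ a := haj.ne'
    have := (τ j).isLt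
    have hne : ¬ (n+1 ≤ (τ j : ℕ)) := fun h => hjne (hval j h)
    omega
  · rintro ⟨hD, hA⟩
    refine ⟨hD, fun i j hij => ⟨?_, ?_⟩⟩
    · rintro hjm ⟨hlt, hge⟩
      exact hA j ((hval i (by omega)) ▸ hij) hjm
    · rintro hjm ⟨hi, hj⟩
      exact hij.ne ((hval i (by omega)).trans (hval j (by omega)).symm)

lemma fiber_thr (hm : 1 ≤ m) (hr : (r:ℕ) = n) :
    inSetAltDomain (n+3) {m} (ins (n+2) τ r) ↔
      (inSetAltDomain (n+2) {m} τ ∧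
       ((τ⁻¹ (Fin.last (n+1)) : ℕ) = m - 1 ∧ ((τ⁻¹ ((Fin.last n).castSucc) : ℕ)) < m - 1)) := by
  rw [mem_ins_iff]
  set a := τ⁻¹ (Fin.last (n+1)) with hadef
  set b := τ⁻¹ ((Fin.last n).castSucc) with hbdef
  have hτa : (τ a : ℕ) = n+1 := by rw [hadef, val_inv_apply]; rfl
  have hτb : (τ b : ℕ) = n := by rw [hbdef, val_inv_apply]; rfl
  have hab : a ≠ b := fun h => by rw [h] at hτa; omega
  have hval : ∀ x : Fin (n+2), n ≤ (τ x : ℕ) → (x = a ∨ x = b) := by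
    intro x h
    have := (τ x).isLt
    rcases Nat.lt_or_ge (τ x : ℕ) (n+1) with h1 | h1
    · right; rw [hbdef, eq_inv_iff]
      exact Fin.ext (by simp only [Fin.coe_castSucc, Fin.val_last]; omega)
    · left; rw [hadef, eq_inv_iff]
      exact Fin.ext (by simp only [Fin.val_last]; omega)
  constructor
  · rintro ⟨hD, hC⟩
    have hba : (b : ℕ) < (a : ℕ) := by
      rcases lt_trichotomy (a:ℕ) (b:ℕ) with h | h | h
      · exfalso
        have hab' : a < b := h
        by_cases hbm : (b:ℕ)+1 = m
        · exact (hC a b hab').1 hbm ⟨by omega, by omega⟩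
        · exact (hC a b hab').2 hbm ⟨by omega, by omega⟩
      · exact absurd (Fin.ext h) hab
      · exact h
    have ham : (a : ℕ) + 1 = m := by
      by_contra ham
      exact (hC b a hba).2 ham ⟨by omega, by omega⟩
    exact ⟨hD, by omega, by omega⟩
  · rintro ⟨hD, ham, hbm⟩
    refine ⟨hD, fun i j hij => ⟨?_, ?_⟩⟩
    · rintro hjm ⟨hlt, hge⟩
      have hja : j = a := Fin.ext (by omega)
      rcases hval i (by omega) with rfl | rfl
      · exact absurd (hja ▸ hij) (lt_irrefl _)
      · rw [hja] at hlt; omega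
    · rintro hjm ⟨hi, hj⟩
      rcases hval i (by omega) with rfl | rfl <;> rcases hval j (by omega) with rfl | rfl
      · exact absurd hij (lt_irrefl _)
      · have : (a:ℕ) < (b:ℕ) := hij
        omega
      · exact hjm (by omega)
      · exact absurd hij (lt_irrefl _)

lemma fiber_zero (hr : (r:ℕ) < n) :
    ¬ inSetAltDomain (n+3) {m} (ins (n+2) τ r) := by
  rw [mem_ins_iff]
  rintro ⟨-, hC⟩
  set x0 := τ⁻¹ ⟨(r:ℕ), by omega⟩ with h0
  set x1 := τ⁻¹ ⟨(r:ℕ)+1, by omega⟩ with h1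
  set x2 := τ⁻¹ ⟨(r:ℕ)+2, by omega⟩ with h2
  have hv0 : (τ x0 : ℕ) = r := by rw [h0, val_inv_apply]
  have hv1 : (τ x1 : ℕ) = r+1 := by rw [h1, val_inv_apply]
  have hv2 : (τ x2 : ℕ) = r+2 := by rw [h2, val_inv_apply]
  have d01 : x0 ≠ x1 := fun h => by rw [h] at hv0; omega
  have d02 : x0 ≠ x2 := fun h => by rw [h] at hv0; omega
  have d12 : x1 ≠ x2 := fun h => by rw [h] at hv1; omega
  obtain ⟨x, y, z, hxy, hyz, hx, hy, hz⟩ :=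
    exists_chain3 (fun x : Fin (n+2) => (r:ℕ) ≤ (τ x:ℕ)) x0 x1 x2 d01 d02 d12
      (by omega) (by omega) (by omega)
  by_cases hym : (y:ℕ)+1 = m
  · have hzm : (z:ℕ)+1 ≠ m := by
      have : (y:ℕ) < (z:ℕ) := hyz
      omega
    exact (hC x z (hxy.trans hyz)).2 hzm ⟨hx, hz⟩
  · exact (hC x y hxy).2 hym ⟨hx, hy⟩

end Fibers

/-- counting quantities -/
def FD (n m : ℕ) : ℕ := (Df n {m}).card
def UD (n m : ℕ) : ℕ := ((Df (n+1) {m}).filter (fun τ => τ (Fin.last n) = Fin.last n)).card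
def VD (n m : ℕ) : ℕ := ((Df (n+2) {m}).filter (fun σ =>
  (σ⁻¹ (Fin.last (n+1)) : ℕ) = m - 1 ∧ ((σ⁻¹ ((Fin.last n).castSucc) : ℕ)) < m - 1)).card

lemma sum_three {N : ℕ} (g : Fin (N+3) → ℕ) (h0 : ∀ r : Fin (N+3), (r:ℕ) < N → g r = 0) :
    ∑ r, g r = g ⟨N, by omega⟩ + g ⟨N+1, by omega⟩ + g ⟨N+2, by omega⟩ := by
  set G : ℕ → ℕ := fun i => if h : i < N+3 then g ⟨i, h⟩ else 0 with hG
  have h1 : ∑ r : Fin (N+3), g r = ∑ i ∈ range (N+3), G i := by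
    rw [← Fin.sum_univ_eq_sum_range]
    exact Finset.sum_congr rfl fun r _ => by simp [hG, r.isLt]
  rw [h1, sum_range_succ, sum_range_succ, sum_range_succ]
  have h2 : ∑ i ∈ range N, G i = 0 := by
    refine Finset.sum_eq_zero fun i hi => ?_
    rw [mem_range] at hi
    simp only [hG, dif_pos (by omega : i < N+3)]
    exact h0 ⟨i, by omega⟩ hi
  rw [h2, zero_add]
  simp only [hG]
  rw [dif_pos (by omega : N < N+3), dif_pos (by omega : N+1 < N+3), dif_pos (by omega : N+2 < N+3)]

lemma inv_eq_of_apply {k : ℕ} (σ : Equiv.Perm (Fin k)) {x y : Fin k} (h : σ y = x) :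
    σ⁻¹ x = y := by rw [← h, Equiv.Perm.inv_apply_self]

/-- master decomposition of FD -/
lemma decomp_F (n m : ℕ) (hm : 1 ≤ m) :
    FD (n+3) m
      = ((Df (n+2) {m}).filter (fun τ =>
           (τ⁻¹ (Fin.last (n+1)) : ℕ) = m - 1 ∧ ((τ⁻¹ ((Fin.last n).castSucc) : ℕ)) < m - 1)).card
        + ((Df (n+2) {m}).filter (fun τ =>
           ∀ j : Fin (n+2), τ⁻¹ (Fin.last (n+1)) < j → (j:ℕ)+1 ≠ m)).card
        + FD (n+2) m := by
  have : FD (n+3) m = (univ.filter (inSetAltDomain (n+3) ({m} : Finset ℕ))).card := rfl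
  rw [this, card_decomp,
    sum_three (fun r => (univ.filter fun τ : Equiv.Perm (Fin (n+2)) =>
      inSetAltDomain (n+3) {m} (ins (n+2) τ r)).card)
      (fun r hr => by
        rw [Finset.card_eq_zero, Finset.filter_eq_empty_iff]
        exact fun τ _ => fiber_zero τ r hr)]
  congr 1
  · congr 1
    · -- third-rank fiber = V-type filter
      rw [Df, filter_filter]
      exact Finset.card_nbij id (fun τ h => by
          simp only [mem_coe, mem_filter, mem_univ, true_and] at h ⊢
          exact (fiber_thr τ _ hm rfl).1 h)
        (fun τ h1 τ2 h2 h => h) (fun τ h => ⟨τ, by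
          simp only [Set.mem_setOf_eq, mem_coe, mem_filter, mem_univ, true_and] at h ⊢
          exact ⟨(fiber_thr τ _ hm rfl).2 h, rfl⟩⟩)
    · rw [Df, filter_filter]
      exact Finset.card_nbij id (fun τ h => by
          simp only [mem_coe, mem_filter, mem_univ, true_and] at h ⊢
          exact (fiber_sec τ _ rfl).1 h)
        (fun τ h1 τ2 h2 h => h) (fun τ h => ⟨τ, by
          simp only [Set.mem_setOf_eq, mem_coe, mem_filter, mem_univ, true_and] at h ⊢
          exact ⟨(fiber_sec τ _ rfl).2 h, rfl⟩⟩)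
  · rw [FD, Df]
    exact Finset.card_nbij id (fun τ h => by
        simp only [mem_coe, mem_filter, mem_univ, true_and] at h ⊢
        exact (fiber_top τ _ rfl).1 h)
      (fun τ h1 τ2 h2 h => h) (fun τ h => ⟨τ, by
        simp only [Set.mem_setOf_eq, mem_coe, mem_filter, mem_univ, true_and] at h ⊢
        exact ⟨(fiber_top τ _ rfl).2 h, rfl⟩⟩)

lemma decomp_U (n m : ℕ) (hm : 1 ≤ m) : UD (n+2) m = FD (n+2) m := by
  have : UD (n+2) m = (univ.filter (fun σ : Equiv.Perm (Fin (n+3)) =>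
      inSetAltDomain (n+3) {m} σ ∧ σ (Fin.last (n+2)) = Fin.last (n+2))).card := by
    rw [UD, Df, filter_filter]
  rw [this, card_decomp,
    sum_three (fun r => (univ.filter fun τ : Equiv.Perm (Fin (n+2)) =>
      inSetAltDomain (n+3) {m} (ins (n+2) τ r) ∧ ins (n+2) τ r (Fin.last (n+2)) = Fin.last (n+2)).card)
      (fun r hr => by
        rw [Finset.card_eq_zero, Finset.filter_eq_empty_iff]
        exact fun τ _ h => fiber_zero τ r hr h.1)]
  have hz1 : (univ.filter fun τ : Equiv.Perm (Fin (n+2)) =>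
      inSetAltDomain (n+3) {m} (ins (n+2) τ ⟨n, Nat.lt_succ_of_lt (Nat.lt_succ_of_lt (Nat.lt_succ_self n))⟩) ∧
      ins (n+2) τ ⟨n, Nat.lt_succ_of_lt (Nat.lt_succ_of_lt (Nat.lt_succ_self n))⟩ (Fin.last (n+2)) = Fin.last (n+2)).card = 0 := by
    rw [Finset.card_eq_zero, Finset.filter_eq_empty_iff]
    intro τ _ h
    have := h.2
    rw [ins_last] at this
    have : (n : ℕ) = n+2 := congrArg Fin.val this
    omega
  have hz2 : (univ.filter fun τ : Equiv.Perm (Fin (n+2)) =>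
      inSetAltDomain (n+3) {m} (ins (n+2) τ ⟨n+1, Nat.lt_succ_of_lt (Nat.lt_succ_self (n+1))⟩) ∧
      ins (n+2) τ ⟨n+1, Nat.lt_succ_of_lt (Nat.lt_succ_self (n+1))⟩ (Fin.last (n+2)) = Fin.last (n+2)).card = 0 := by
    rw [Finset.card_eq_zero, Finset.filter_eq_empty_iff]
    intro τ _ h
    have := h.2
    rw [ins_last] at this
    have : (n+1 : ℕ) = n+2 := congrArg Fin.val this
    omega
  rw [hz1, hz2]
  simp only [Nat.zero_add, Nat.add_zero]
  rw [FD, Df]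
  refine Finset.card_nbij id (fun τ h => by
      simp only [mem_coe, mem_filter, mem_univ, true_and] at h ⊢
      exact (fiber_top τ _ rfl).1 h.1)
    (fun τ h1 τ2 h2 h => h) (fun τ h => ⟨τ, by
      simp only [Set.mem_setOf_eq, mem_coe, mem_filter, mem_univ, true_and] at h ⊢
      exact ⟨⟨(fiber_top τ _ rfl).2 h, by rw [ins_last]; exact Fin.ext rfl⟩, rfl⟩⟩)

lemma decomp_V (n m : ℕ) (hm : 1 ≤ m) (hm2 : m ≤ n+2) : VD (n+1) m = VD n m := by
  have : VD (n+1) m = (univ.filter (fun σ : Equiv.Perm (Fin (n+3)) =>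
      inSetAltDomain (n+3) {m} σ ∧
      ((σ⁻¹ (Fin.last (n+2)) : ℕ) = m - 1 ∧ ((σ⁻¹ ((Fin.last (n+1)).castSucc) : ℕ)) < m - 1))).card := by
    rw [VD, Df, filter_filter]
  rw [this, card_decomp,
    sum_three (fun r => (univ.filter fun τ : Equiv.Perm (Fin (n+2)) =>
      inSetAltDomain (n+3) {m} (ins (n+2) τ r) ∧
      (((ins (n+2) τ r)⁻¹ (Fin.last (n+2)) : ℕ) = m - 1 ∧
       (((ins (n+2) τ r)⁻¹ ((Fin.last (n+1)).castSucc) : ℕ)) < m - 1)).card)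
      (fun r hr => by
        rw [Finset.card_eq_zero, Finset.filter_eq_empty_iff]
        exact fun τ _ h => fiber_zero τ r hr h.1)]
  have hz2 : (univ.filter fun τ : Equiv.Perm (Fin (n+2)) =>
      inSetAltDomain (n+3) {m} (ins (n+2) τ ⟨n+2, Nat.lt_succ_self (n+2)⟩) ∧
      (((ins (n+2) τ ⟨n+2, Nat.lt_succ_self (n+2)⟩)⁻¹ (Fin.last (n+2)) : ℕ) = m - 1 ∧
       (((ins (n+2) τ ⟨n+2, Nat.lt_succ_self (n+2)⟩)⁻¹ ((Fin.last (n+1)).castSucc) : ℕ)) < m - 1)).card = 0 := by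
    rw [Finset.card_eq_zero, Finset.filter_eq_empty_iff]
    intro τ _ h
    have hinv : (ins (n+2) τ ⟨n+2, Nat.lt_succ_self (n+2)⟩)⁻¹ (Fin.last (n+2)) = Fin.last (n+2) := by
      refine inv_eq_of_apply _ ?_
      rw [ins_last]
      exact Fin.ext rfl
    rw [hinv] at h
    have : (n+2 : ℕ) = m - 1 := h.2.1
    omega
  have hz1 : (univ.filter fun τ : Equiv.Perm (Fin (n+2)) =>
      inSetAltDomain (n+3) {m} (ins (n+2) τ ⟨n+1, Nat.lt_succ_of_lt (Nat.lt_succ_self (n+1))⟩) ∧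
      (((ins (n+2) τ ⟨n+1, Nat.lt_succ_of_lt (Nat.lt_succ_self (n+1))⟩)⁻¹ (Fin.last (n+2)) : ℕ) = m - 1 ∧
       (((ins (n+2) τ ⟨n+1, Nat.lt_succ_of_lt (Nat.lt_succ_self (n+1))⟩)⁻¹ ((Fin.last (n+1)).castSucc) : ℕ)) < m - 1)).card = 0 := by
    rw [Finset.card_eq_zero, Finset.filter_eq_empty_iff]
    intro τ _ h
    have hinv : (ins (n+2) τ ⟨n+1, Nat.lt_succ_of_lt (Nat.lt_succ_self (n+1))⟩)⁻¹ ((Fin.last (n+1)).castSucc) = Fin.last (n+2) := by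
      refine inv_eq_of_apply _ ?_
      rw [ins_last]
      exact Fin.ext rfl
    rw [hinv] at h
    have : (n+2 : ℕ) < m - 1 := h.2.2
    omega
  rw [hz1, hz2]
  simp only [Nat.zero_add, Nat.add_zero]
  -- remaining: third-rank fiber equals VD n m
  have hvals : ∀ τ : Equiv.Perm (Fin (n+2)),
      ((ins (n+2) τ ⟨n, Nat.lt_succ_of_lt (Nat.lt_succ_of_lt (Nat.lt_succ_self n))⟩)⁻¹ (Fin.last (n+2)) : ℕ) = (τ⁻¹ (Fin.last (n+1)) : ℕ) ∧
      ((ins (n+2) τ ⟨n, Nat.lt_succ_of_lt (Nat.lt_succ_of_lt (Nat.lt_succ_self n))⟩)⁻¹ ((Fin.last (n+1)).castSucc) : ℕ)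
        = (τ⁻¹ ((Fin.last n).castSucc) : ℕ) := by
    intro τ
    constructor
    · have : (ins (n+2) τ ⟨n, Nat.lt_succ_of_lt (Nat.lt_succ_of_lt (Nat.lt_succ_self n))⟩)⁻¹ (Fin.last (n+2))
          = Fin.castSucc (τ⁻¹ (Fin.last (n+1))) := by
        refine inv_eq_of_apply _ ?_
        rw [ins_castSucc, Equiv.Perm.apply_inv_self]
        refine Fin.ext ?_
        rw [coe_succAbove]
        simp [Fin.val_last]
      rw [this, Fin.coe_castSucc]
    · have : (ins (n+2) τ ⟨n, Nat.lt_succ_of_lt (Nat.lt_succ_of_lt (Nat.lt_succ_self n))⟩)⁻¹ ((Fin.last (n+1)).castSucc)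
          = Fin.castSucc (τ⁻¹ ((Fin.last n).castSucc)) := by
        refine inv_eq_of_apply _ ?_
        rw [ins_castSucc, Equiv.Perm.apply_inv_self]
        refine Fin.ext ?_
        rw [coe_succAbove]
        simp [Fin.val_last]
      rw [this, Fin.coe_castSucc]
  rw [VD, Df, filter_filter]
  refine Finset.card_nbij id (fun τ h => by
      simp only [mem_coe, mem_filter, mem_univ, true_and] at h ⊢
      obtain ⟨h1, h2⟩ := h
      rw [(hvals τ).1, (hvals τ).2] at h2
      exact ⟨(fiber_thr τ _ hm rfl).1 h1 |>.1, h2⟩)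
    (fun τ h1 τ2 h2 h => h) (fun τ h => ⟨τ, by
      simp only [Set.mem_setOf_eq, mem_coe, mem_filter, mem_univ, true_and] at h ⊢
      refine ⟨(fiber_thr τ _ hm rfl).2 ⟨h.1, h.2⟩, ?_⟩
      rw [(hvals τ).1, (hvals τ).2]
      exact h.2, rfl⟩)

lemma mem_Df {n m : ℕ} {τ : Equiv.Perm (Fin n)} : τ ∈ Df n {m} ↔ inSetAltDomain n {m} τ := by
  simp [Df]

/-- every member of the domain has its worst alternative ≥ m-1 (regime m ≤ n+1) -/
lemma lemW {n m : ℕ} (hm : 1 ≤ m) (hm2 : m ≤ n+1) {τ : Equiv.Perm (Fin (n+2))}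
    (hτ : inSetAltDomain (n+2) {m} τ) :
    ∀ j : Fin (n+2), τ⁻¹ (Fin.last (n+1)) < j → (j:ℕ)+1 ≠ m := by
  intro j haj hjm
  set a := τ⁻¹ (Fin.last (n+1)) with ha
  have hτa : (τ a : ℕ) = n+1 := by rw [ha, Equiv.Perm.apply_inv_self]; rfl
  have hk : m < n+2 := by omega
  set k : Fin (n+2) := ⟨m, hk⟩ with hkdef
  have hkv : (k:ℕ) = m := by rw [hkdef]
  have hjk : j < k := by
    have : (j:ℕ) < (k:ℕ) := by omega
    exact this
  have h1 := (hτ a j k haj hjk).1 (by simp; omega)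
  apply h1
  have hja : j ≠ a := haj.ne'
  have hka : k ≠ a := (haj.trans hjk).ne'
  have h2 : (τ j : ℕ) ≠ n+1 := by
    intro h
    exact hja (τ.injective (Fin.ext (by rw [h, hτa])))
  have h3 : (τ k : ℕ) ≠ n+1 := by
    intro h
    exact hka (τ.injective (Fin.ext (by rw [h, hτa])))
  have := (τ j).isLt
  have := (τ k).isLt
  exact ⟨Fin.lt_def.2 (by omega), Fin.lt_def.2 (by omega)⟩

lemma inv_last_iff (n : ℕ) (τ : Equiv.Perm (Fin (n+2))) :
    ((τ⁻¹ (Fin.last (n+1)) : ℕ) = n+1 ∧ ((τ⁻¹ ((Fin.last n).castSucc) : ℕ)) < n+1)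
      ↔ τ (Fin.last (n+1)) = Fin.last (n+1) := by
  constructor
  · rintro ⟨h1, -⟩
    have : τ⁻¹ (Fin.last (n+1)) = Fin.last (n+1) := Fin.ext (by rw [h1]; rfl)
    calc τ (Fin.last (n+1)) = τ (τ⁻¹ (Fin.last (n+1))) := by rw [this]
      _ = Fin.last (n+1) := Equiv.Perm.apply_inv_self τ _
  · intro h
    have h1 : τ⁻¹ (Fin.last (n+1)) = Fin.last (n+1) := inv_eq_of_apply τ h
    refine ⟨by rw [h1]; rfl, ?_⟩
    have hne : τ⁻¹ ((Fin.last n).castSucc) ≠ Fin.last (n+1) := by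
      intro hb
      rw [← h1] at hb
      have := τ⁻¹.injective hb
      have : (n : ℕ) = n+1 := congrArg Fin.val this
      omega
    have := (τ⁻¹ ((Fin.last n).castSucc)).isLt
    have : (τ⁻¹ ((Fin.last n).castSucc) : ℕ) ≠ n+1 := fun h' => hne (Fin.ext (by rw [h']; rfl))
    omega

lemma sec_cond_iff (n : ℕ) (τ : Equiv.Perm (Fin (n+2))) :
    (∀ j : Fin (n+2), τ⁻¹ (Fin.last (n+1)) < j → (j:ℕ)+1 ≠ n+2)
      ↔ τ (Fin.last (n+1)) = Fin.last (n+1) := by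
  constructor
  · intro h
    by_contra hne
    have hane : τ⁻¹ (Fin.last (n+1)) ≠ Fin.last (n+1) := by
      intro ha
      exact hne (by rw [← ha, Equiv.Perm.apply_inv_self, ha])
    have hval : (τ⁻¹ (Fin.last (n+1)) : ℕ) ≠ n+1 :=
      fun h' => hane (Fin.ext (by rw [h']; rfl))
    have := (τ⁻¹ (Fin.last (n+1))).isLt
    refine h (Fin.last (n+1)) ?_ (by rw [Fin.val_last])
    change (τ⁻¹ (Fin.last (n+1)) : ℕ) < (Fin.last (n+1) : ℕ)
    rw [Fin.val_last]
    omega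
  · intro h j hj
    have h1 : τ⁻¹ (Fin.last (n+1)) = Fin.last (n+1) := inv_eq_of_apply τ h
    rw [h1] at hj
    have hv1 : (n+1 : ℕ) < (j : ℕ) := by simpa [Fin.lt_def] using hj
    have hv2 := j.isLt
    omega

lemma P1 (n m : ℕ) (hm : n+3 ≤ m) : FD (n+3) m = 2 * FD (n+2) m := by
  rw [decomp_F n m (by omega)]
  have h1 : ((Df (n+2) {m}).filter (fun τ =>
      (τ⁻¹ (Fin.last (n+1)) : ℕ) = m - 1 ∧ ((τ⁻¹ ((Fin.last n).castSucc) : ℕ)) < m - 1)).card = 0 := by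
    rw [Finset.card_eq_zero, Finset.filter_eq_empty_iff]
    intro τ _ h
    have := (τ⁻¹ (Fin.last (n+1))).isLt
    omega
  have h2 : ((Df (n+2) {m}).filter (fun τ =>
      ∀ j : Fin (n+2), τ⁻¹ (Fin.last (n+1)) < j → (j:ℕ)+1 ≠ m)).card = FD (n+2) m := by
    rw [Finset.filter_true_of_mem]
    · rfl
    · intro τ _ j _ hjm
      have := j.isLt
      omega
  rw [h1, h2]
  omega

lemma P3 (n : ℕ) : FD (n+3) (n+2) = FD (n+2) (n+2) + 2 * UD (n+1) (n+2) := by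
  rw [decomp_F n (n+2) (by omega)]
  have e1 : ((Df (n+2) {n+2}).filter (fun τ =>
      (τ⁻¹ (Fin.last (n+1)) : ℕ) = (n+2) - 1 ∧ ((τ⁻¹ ((Fin.last n).castSucc) : ℕ)) < (n+2) - 1)).card
      = UD (n+1) (n+2) := by
    rw [UD]
    congr 1
    refine Finset.filter_congr fun τ _ => ?_
    have : (n+2) - 1 = n+1 := rfl
    rw [this]
    exact inv_last_iff n τ
  have e2 : ((Df (n+2) {n+2}).filter (fun τ =>
      ∀ j : Fin (n+2), τ⁻¹ (Fin.last (n+1)) < j → (j:ℕ)+1 ≠ n+2)).card = UD (n+1) (n+2) := by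
    rw [UD]
    congr 1
    exact Finset.filter_congr fun τ _ => sec_cond_iff n τ
  rw [e1, e2]
  omega

lemma P5 (n m : ℕ) (hm : 1 ≤ m) (hm2 : m ≤ n+1) :
    FD (n+3) m = 2 * FD (n+2) m + VD n m := by
  rw [decomp_F n m hm]
  have h2 : ((Df (n+2) {m}).filter (fun τ =>
      ∀ j : Fin (n+2), τ⁻¹ (Fin.last (n+1)) < j → (j:ℕ)+1 ≠ m)).card = FD (n+2) m := by
    rw [Finset.filter_true_of_mem]
    · rfl
    · intro τ hτ
      exact lemW hm hm2 (mem_Df.1 hτ)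
  rw [h2, VD]
  omega

lemma VU (n : ℕ) : VD n (n+2) = UD (n+1) (n+2) := by
  rw [VD, UD]
  congr 1
  refine Finset.filter_congr fun τ _ => ?_
  have : (n+2) - 1 = n+1 := rfl
  rw [this]
  exact inv_last_iff n τ

lemma D2_univ (A : Finset ℕ) (σ : Equiv.Perm (Fin 2)) : inSetAltDomain 2 A σ := by
  intro i j k hij hjk
  exfalso
  have h1 : (i:ℕ) < (j:ℕ) := hij
  have h2 : (j:ℕ) < (k:ℕ) := hjk
  have := k.isLt
  omega

lemma FD_two (m : ℕ) : FD 2 m = 2 := by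
  rw [FD, Df, Finset.filter_true_of_mem (fun σ _ => D2_univ _ σ), card_univ,
    Fintype.card_perm, Fintype.card_fin]
  rfl

lemma UD_one (m : ℕ) : UD 1 m = 1 := by
  rw [UD, Df, Finset.filter_true_of_mem (fun σ _ => D2_univ _ σ)]
  decide

lemma VD_m1 (k : ℕ) : VD k 1 = 0 := by
  rw [VD, Finset.card_eq_zero, Finset.filter_eq_empty_iff]
  intro σ _ h
  exact Nat.not_lt_zero _ h.2

lemma chain1 (m : ℕ) : ∀ k, 2 ≤ k → k ≤ m → FD k m = 2^(k-1) := by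
  intro k hk
  induction k, hk using Nat.le_induction with
  | base => intro _; rw [FD_two]; rfl
  | succ k hk ih =>
    intro hkm
    obtain ⟨j, rfl⟩ : ∃ j, k = j+2 := ⟨k-2, by omega⟩
    rw [show j+2+1 = j+3 from rfl, P1 j m (by omega), ih (by omega)]
    show 2 * 2^(j+1) = 2^(j+2)
    ring

lemma U_val (m : ℕ) (hm : 2 ≤ m) : UD (m-1) m = 2^(m-2) := by
  rcases Nat.lt_or_ge m 3 with h | h
  · have : m = 2 := by omega
    subst this
    rw [UD_one]; rfl
  · obtain ⟨j, rfl⟩ : ∃ j, m = j+3 := ⟨m-3, by omega⟩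
    show UD (j+2) (j+3) = 2^(j+1)
    rw [decomp_U j (j+3) (by omega), chain1 (j+3) (j+2) (by omega) (by omega)]; rfl

lemma F_m1 (m : ℕ) (hm : 2 ≤ m) : FD (m+1) m = 2^m := by
  obtain ⟨j, rfl⟩ : ∃ j, m = j+2 := ⟨m-2, by omega⟩
  show FD (j+3) (j+2) = 2^(j+2)
  rw [P3 j, chain1 (j+2) (j+2) (by omega) le_rfl]
  rw [show j+2-1 = j+1 from rfl]
  have hu : UD (j+1) (j+2) = 2^j := U_val (j+2) (by omega)
  rw [hu]
  show 2^(j+1) + 2*2^j = 2^(j+2)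
  ring

lemma V_const (m : ℕ) (hm : 2 ≤ m) : ∀ j, m-2 ≤ j → VD j m = 2^(m-2) := by
  have base : VD (m-2) m = 2^(m-2) := by
    obtain ⟨i, rfl⟩ : ∃ i, m = i+2 := ⟨m-2, by omega⟩
    show VD i (i+2) = 2^i
    rw [VU i]
    exact U_val (i+2) (by omega)
  intro j hj
  induction j, hj using Nat.le_induction with
  | base => exact base
  | succ j hj ih =>
    rw [decomp_V j m (by omega) (by omega), ih]

lemma F_one : ∀ n, 2 ≤ n → FD n 1 = 2^(n-1) := by
  intro n hn
  induction n, hn using Nat.le_induction with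
  | base => rw [FD_two]; rfl
  | succ n hn ih =>
    obtain ⟨j, rfl⟩ : ∃ j, n = j+2 := ⟨n-2, by omega⟩
    rw [show j+2+1 = j+3 from rfl, P5 j 1 le_rfl (by omega), ih, VD_m1]
    show 2*2^(j+1) + 0 = 2^(j+2)
    ring

lemma F_main (m : ℕ) (hm : 2 ≤ m) : ∀ n, m+2 ≤ n → FD n m + 2^(m-2) = 5*2^(n-3) := by
  intro n hn
  induction n, hn using Nat.le_induction with
  | base =>
    obtain ⟨e, rfl⟩ : ∃ e, m = e+2 := ⟨m-2, by omega⟩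
    show FD ((e+1)+3) (e+2) + 2^e = 5*2^(e+1)
    rw [P5 (e+1) (e+2) (by omega) (by omega), F_m1 (e+2) (by omega),
      V_const (e+2) (by omega) (e+1) (by omega)]
    show 2*2^(e+2) + 2^e + 2^e = 5*2^(e+1)
    ring
  | succ n hn ih =>
    obtain ⟨p, rfl⟩ : ∃ p, n = p+4 := ⟨n-4, by omega⟩
    show FD ((p+2)+3) m + 2^(m-2) = 5*2^(p+2)
    rw [P5 (p+2) m (by omega) (by omega), V_const m hm (p+2) (by omega)]
    have ih' : FD (p+2+2) m + 2^(m-2) = 5*2^(p+1) := ih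
    have hp : (2:ℕ)^(p+2) = 2*2^(p+1) := by ring
    omega

theorem stmt9' (n : ℕ) (hn : 2 ≤ n) :
    FD n 1 = 2^(n-1) ∧ FD n (n-1) = 2^(n-1) ∧ FD n n = 2^(n-1) ∧
    ∀ k : ℕ, 2 ≤ k → k ≤ n - 2 → FD n k = 5 * 2^(n-3) - 2^(k-2) := by
  refine ⟨F_one n hn, ?_, chain1 n n hn le_rfl, ?_⟩
  · rcases Nat.lt_or_ge n 3 with h | h
    · have h2 : n = 2 := by omega
      subst h2
      exact F_one 2 (by omega)
    · obtain ⟨m, rfl⟩ : ∃ m, n = m+2 := ⟨n-2, by omega⟩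
      show FD (m+2) (m+1) = 2^(m+1)
      exact F_m1 (m+1) (by omega)
  · intro k hk2 hkn
    have h5 := F_main k hk2 n (by omega)
    omega


lemma fsize_eq (n : ℕ) (A : Finset ℕ) : fsize n A = (Df n A).card := by
  rw [fsize, ← Set.ncard_coe_finset]
  congr 1
  ext σ
  simp [Df, setAltDomain]

end SetAltAux

/-- `f_n({1}) = f_n({n-1}) = f_n({n}) = 2^{n-1}`, and for
`2 ≤ k ≤ n-2`, `f_n({k}) = 5·2^{n-3} - 2^{k-2}`. -/
theorem stmt9 (n : ℕ) (hn : 2 ≤ n) :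
    fsize n {1} = 2^(n-1) ∧ fsize n {n-1} = 2^(n-1) ∧ fsize n {n} = 2^(n-1) ∧
    ∀ k : ℕ, 2 ≤ k → k ≤ n - 2 → fsize n {k} = 5 * 2^(n-3) - 2^(k-2) := by
  obtain ⟨h1, h2, h3, h4⟩ := SetAltAux.stmt9' n hn
  have hf : ∀ m : ℕ, fsize n {m} = SetAltAux.FD n m := fun m => SetAltAux.fsize_eq n {m}
  exact ⟨(hf 1).trans h1, (hf (n-1)).trans h2, (hf n).trans h3,
    fun k hk hkn => (hf k).trans (h4 k hk hkn)⟩
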